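/- For every natural number m ≥ 3, the connective eccentric index of the m-sided prism Π_m equals 12m/(m+2) if m is even, and 12m/(m+1) if m is odd. -/

import Mathlib

/-- The eccentricity of a vertex `v` in a finite graph `G`:
the maximum distance from `v` to any other vertex. -/
noncomputable def eccentricity {V : Type*} [Fintype V] (G : SimpleGraph V) (v : V) : ℕ :=
  Finset.univ.sup fun u => G.dist v u

/-- The connective eccentric index `C^ξ(G) = ∑_v deg(v)/ε(v)`, as a rational number. -/
noncomputable def connEccIndex {V : Type*} [Fintype V] (G : SimpleGraph V) : ℚ :=
  letI := Classical.decRel G.Adj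
  ∑ v : V, (G.degree v : ℚ) / (eccentricity G v)

/-- The `m`-sided prism: the box product of the cycle `C_m` with `K_2`. -/
def prism (m : ℕ) : SimpleGraph (Fin m × Fin 2) :=
  SimpleGraph.boxProd (SimpleGraph.cycleGraph m) (⊤ : SimpleGraph (Fin 2))

open SimpleGraph
open Fin.CommRing Fin.NatCast

section BoxProdDist
variable {α β : Type*} {G : SimpleGraph α} {H : SimpleGraph β}

lemma dist_add_dist_le_walk_length (hG : G.Connected) (hH : H.Connected) {x y : α × β}
    (w : (G □ H).Walk x y) : G.dist x.1 y.1 + H.dist x.2 y.2 ≤ w.length := by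
  induction w with
  | nil => simp
  | @cons x z y h w ih =>
    rw [SimpleGraph.Walk.length_cons]
    rcases SimpleGraph.boxProd_adj.mp h with ⟨h1, h2⟩ | ⟨h1, h2⟩
    · have t1 : G.dist x.1 y.1 ≤ G.dist x.1 z.1 + G.dist z.1 y.1 := hG.dist_triangle
      have t2 : G.dist x.1 z.1 = 1 := SimpleGraph.dist_eq_one_iff_adj.mpr h1
      rw [h2]
      omega
    · have t1 : H.dist x.2 y.2 ≤ H.dist x.2 z.2 + H.dist z.2 y.2 := hH.dist_triangle
      have t2 : H.dist x.2 z.2 = 1 := SimpleGraph.dist_eq_one_iff_adj.mpr h1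
      rw [h2]
      omega

lemma boxProd_dist (hG : G.Connected) (hH : H.Connected) (x y : α × β) :
    (G □ H).dist x y = G.dist x.1 y.1 + H.dist x.2 y.2 := by
  refine le_antisymm ?_ ?_
  · obtain ⟨w1, hw1⟩ := (hG.preconnected x.1 y.1).exists_walk_length_eq_dist
    obtain ⟨w2, hw2⟩ := (hH.preconnected x.2 y.2).exists_walk_length_eq_dist
    have := SimpleGraph.dist_le ((w1.boxProdLeft H x.2).append (w2.boxProdRight G y.1))
    have e1 : (w1.boxProdLeft H x.2).length = w1.length := SimpleGraph.Walk.length_map _ _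
    have e2 : (w2.boxProdRight G y.1).length = w2.length := SimpleGraph.Walk.length_map _ _
    rw [SimpleGraph.Walk.length_append, e1, e2, hw1, hw2] at this
    simpa [SimpleGraph.Walk.boxProdLeft, SimpleGraph.Walk.boxProdRight, hw1, hw2] using this
  · obtain ⟨w, hw⟩ := ((hG.boxProd hH).preconnected x y).exists_walk_length_eq_dist
    rw [← hw]
    exact dist_add_dist_le_walk_length hG hH w

end BoxProdDist

section Cyc
variable {m : ℕ} [NeZero m]

/-- the "circular distance" function on `Fin m` -/
def circDist (x : Fin m) : ℕ := min x.val (-x).val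

omit [NeZero m] in
lemma circDist_neg (x : Fin m) : circDist (-x) = circDist x := by
  simp [circDist, Nat.min_comm]

lemma circDist_add_one (hm : 2 ≤ m) (x : Fin m) : circDist (x + 1) ≤ circDist x + 1 := by
  have hv1 : (1 : Fin m).val = 1 := by
    rw [Fin.val_one']; exact Nat.mod_eq_of_lt (by omega)
  by_cases hx : x = 0
  · subst hx
    rw [zero_add]
    calc circDist (1 : Fin m) ≤ (1 : Fin m).val := Nat.min_le_left _ _
    _ = 1 := hv1
    _ ≤ _ := by omega
  · have hxv : 1 ≤ x.val := by
      rcases Nat.eq_zero_or_pos x.val with h | h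
      · exact absurd (Fin.ext h) hx
      · exact h
    have hxm : x.val < m := x.isLt
    have hadd : (x + 1).val = (x.val + 1) % m := by
      rw [Fin.add_def, hv1]
    have hneg : (-x).val = (m - x.val) % m := by rw [Fin.neg_def]
    have hneg' : (-(x + 1)).val = (m - (x + 1).val) % m := by rw [Fin.neg_def]
    simp only [circDist, hadd, hneg, hneg']
    rcases Nat.lt_or_ge (x.val + 1) m with h | h
    · rw [Nat.mod_eq_of_lt h, Nat.mod_eq_of_lt (by omega), Nat.mod_eq_of_lt (by omega)]
      omega
    · have hxm1 : x.val + 1 = m := by omega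
      rw [hxm1]
      simp

lemma circDist_sub_one (hm : 2 ≤ m) (x : Fin m) : circDist (x - 1) ≤ circDist x + 1 := by
  have : x - 1 = -(-x + 1) := by ring
  rw [this, circDist_neg]
  exact le_trans (circDist_add_one hm _) (by rw [circDist_neg])

lemma circDist_le_walk_length (hm : 2 ≤ m) {u v : Fin m} (w : (cycleGraph m).Walk u v) :
    circDist (v - u) ≤ w.length := by
  induction w with
  | nil => simp [circDist]
  | @cons u z v h w ih =>
    rw [SimpleGraph.Walk.length_cons]
    rcases (SimpleGraph.cycleGraph_adj').mp h with h1 | h1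
    · have h2 : u - z = 1 := by
        apply Fin.ext
        rw [h1, Fin.val_one']
        exact (Nat.mod_eq_of_lt (by omega)).symm
      have : v - u = (v - z) - 1 := by
        rw [← h2]; ring
      rw [this]
      exact le_trans (circDist_sub_one hm _) (by omega)
    · have h2 : z - u = 1 := by
        apply Fin.ext
        rw [h1, Fin.val_one']
        exact (Nat.mod_eq_of_lt (by omega)).symm
      have : v - u = (v - z) + 1 := by
        rw [← h2]; ring
      rw [this]
      exact le_trans (circDist_add_one hm _) (by omega)

lemma cycle_connected : (SimpleGraph.cycleGraph m).Connected :=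
  (SimpleGraph.connected_iff _).mpr ⟨SimpleGraph.cycleGraph_preconnected, ⟨0⟩⟩

lemma cycle_dist_le_natCast (hm : 2 ≤ m) (u : Fin m) (n : ℕ) :
    (cycleGraph m).dist u (u + n) ≤ n := by
  induction n with
  | zero => simp
  | succ n ih =>
    have hadj : (cycleGraph m).Adj (u + n) (u + (n + 1 : ℕ)) := by
      rw [SimpleGraph.cycleGraph_adj']
      right
      push_cast
      have : (u + (↑n + 1) - (u + ↑n) : Fin m) = 1 := by ring
      rw [this, Fin.val_one']
      exact Nat.mod_eq_of_lt (by omega)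
    calc (cycleGraph m).dist u (u + (n + 1 : ℕ))
        ≤ (cycleGraph m).dist u (u + n) + (cycleGraph m).dist (u + n) (u + (n+1 : ℕ)) :=
          cycle_connected.dist_triangle
      _ ≤ n + 1 := by
          have := SimpleGraph.dist_eq_one_iff_adj.mpr hadj
          omega

lemma cycle_dist_eq (hm : 2 ≤ m) (u v : Fin m) :
    (cycleGraph m).dist u v = circDist (v - u) := by
  refine le_antisymm ?_ ?_
  · rw [circDist]
    refine le_min ?_ ?_
    · have h1 : u + ((v - u).val : ℕ) = v := by
        rw [Fin.cast_val_eq_self]; ring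
      calc (cycleGraph m).dist u v = (cycleGraph m).dist u (u + ((v-u).val : ℕ)) := by rw [h1]
        _ ≤ (v - u).val := cycle_dist_le_natCast hm u _
    · have h1 : v + ((u - v).val : ℕ) = u := by
        rw [Fin.cast_val_eq_self]; ring
      have h2 : -(v - u) = u - v := by ring
      rw [h2]
      calc (cycleGraph m).dist u v = (cycleGraph m).dist v (v + ((u-v).val : ℕ)) := by
            rw [h1, SimpleGraph.dist_comm]
        _ ≤ (u - v).val := cycle_dist_le_natCast hm v _
  · obtain ⟨w, hw⟩ := (cycle_connected.preconnected u v).exists_walk_length_eq_dist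
    rw [← hw]
    exact circDist_le_walk_length hm w

end Cyc

section Top2
lemma top2_connected : (⊤ : SimpleGraph (Fin 2)).Connected := by
  rw [SimpleGraph.connected_iff]
  refine ⟨fun a b => ?_, ⟨0⟩⟩
  by_cases h : a = b
  · subst h; rfl
  · exact ((SimpleGraph.top_adj a b).mpr h).reachable

lemma top2_dist (a b : Fin 2) :
    (⊤ : SimpleGraph (Fin 2)).dist a b = if a = b then 0 else 1 := by
  by_cases h : a = b
  · simp [h]
  · rw [if_neg h]
    exact SimpleGraph.dist_eq_one_iff_adj.mpr ((SimpleGraph.top_adj a b).mpr h)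
end Top2

section Prism
variable {m : ℕ}

lemma prism_ecc (hm : 3 ≤ m) (x : Fin m × Fin 2) :
    eccentricity (prism m) x = m / 2 + 1 := by
  haveI : NeZero m := ⟨by omega⟩
  have hm2 : 2 ≤ m := by omega
  apply le_antisymm
  · apply Finset.sup_le
    intro y _
    rw [prism, boxProd_dist cycle_connected top2_connected, cycle_dist_eq hm2]
    have h1 : circDist (y.1 - x.1) ≤ m / 2 := by
      set z := y.1 - x.1 with hz
      have hzm : z.val < m := z.isLt
      have hneg : (-z).val = (m - z.val) % m := by rw [Fin.neg_def]
      rcases Nat.eq_zero_or_pos z.val with h | h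
      · simp [circDist, h]
      · have hneg' : (-z).val = m - z.val := by
          rw [hneg]; exact Nat.mod_eq_of_lt (by omega)
        rw [circDist, hneg']; omega
    have h2 : (⊤ : SimpleGraph (Fin 2)).dist x.2 y.2 ≤ 1 := by
      rw [top2_dist]; split <;> omega
    omega
  · have hk : (m/2 : ℕ) < m := by omega
    have hk1 : 1 ≤ m/2 := by omega
    have hle := Finset.le_sup (f := fun y => (prism m).dist x y)
      (Finset.mem_univ ((x.1 + ((m/2 : ℕ) : Fin m), x.2 + 1) : Fin m × Fin 2))
    refine le_trans ?_ hle
    show m/2 + 1 ≤ (prism m).dist x ((x.1 + ((m/2:ℕ) : Fin m), x.2 + 1) : Fin m × Fin 2)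
    rw [prism, boxProd_dist cycle_connected top2_connected, cycle_dist_eq hm2]
    have e1 : ((x.1 + ((m/2:ℕ) : Fin m), x.2 + 1) : Fin m × Fin 2).1 - x.1
        = ((m/2 : ℕ) : Fin m) := by
      simp only []; ring
    rw [e1]
    have hval : (((m/2 : ℕ) : Fin m)).val = m/2 := by
      rw [Fin.val_natCast]; exact Nat.mod_eq_of_lt hk
    have hnval : ((-((m/2 : ℕ) : Fin m))).val = m - m/2 := by
      rw [Fin.neg_def]
      simp only [hval]
      exact Nat.mod_eq_of_lt (by omega)
    have hcd : circDist ((m/2 : ℕ) : Fin m) = m / 2 := by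
      rw [circDist, hval, hnval]; omega
    have hne : x.2 ≠ ((x.1 + ((m/2:ℕ) : Fin m), x.2 + 1) : Fin m × Fin 2).2 := by
      simp only []
      intro h
      have := left_eq_add.mp h
      exact absurd this (by decide)
    have hd2 : (⊤ : SimpleGraph (Fin 2)).dist x.2
        ((x.1 + ((m/2:ℕ) : Fin m), x.2 + 1) : Fin m × Fin 2).2 = 1 := by
      rw [top2_dist, if_neg hne]
    rw [hcd, hd2]

lemma prism_degree (hm : 3 ≤ m) (x : Fin m × Fin 2)
    (inst : Fintype ((prism m).neighborSet x)) :
    @SimpleGraph.degree _ (prism m) x inst = 3 := by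
  obtain ⟨k, rfl⟩ : ∃ k, m = k + 3 := ⟨m - 3, by omega⟩
  letI i3 : Fintype (((SimpleGraph.cycleGraph (k+3)) □ (⊤ : SimpleGraph (Fin 2))).neighborSet x) :=
    SimpleGraph.boxProdFintypeNeighborSet x
  have e : inst = i3 := Subsingleton.elim _ _
  subst e
  have h := SimpleGraph.degree_boxProd (G := SimpleGraph.cycleGraph (k+3))
    (H := (⊤ : SimpleGraph (Fin 2))) x
  rw [SimpleGraph.cycleGraph_degree_three_le, SimpleGraph.complete_graph_degree] at h
  simp at h
  exact h

end Prism

/-- The connective eccentric index of the `m`-sided prism equals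
`12m/(m+2)` if `m` is even and `12m/(m+1)` if `m` is odd. -/
theorem connEccIndex_prism (m : ℕ) (hm : 3 ≤ m) :
    (Even m → connEccIndex (prism m) = (12 * m : ℚ) / ((m : ℚ) + 2)) ∧
    (Odd m → connEccIndex (prism m) = (12 * m : ℚ) / ((m : ℚ) + 1)) := by
  have hsum : connEccIndex (prism m) = (2 * m : ℚ) * (3 / ((m/2 : ℕ) + 1 : ℕ)) := by
    rw [connEccIndex]
    trans (∑ _v : Fin m × Fin 2, (3:ℚ)/(((m/2 : ℕ) + 1 : ℕ) : ℚ))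
    · apply Finset.sum_congr rfl
      intro x _
      rw [prism_degree hm x, prism_ecc hm x]; norm_num
    · rw [Finset.sum_const]
      simp only [Finset.card_univ, Fintype.card_prod, Fintype.card_fin, nsmul_eq_mul]
      push_cast
      ring
  constructor
  · rintro ⟨t, rfl⟩
    have h2 : (t + t) / 2 = t := by omega
    rw [hsum, h2]
    have ht : 1 ≤ t := by omega
    push_cast
    have : (t : ℚ) + 1 ≠ 0 := by positivity
    field_simp
    ring
  · rintro ⟨t, rfl⟩
    have h2 : (2 * t + 1) / 2 = t := by omega
    rw [hsum, h2]
    push_cast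
    have : (t : ℚ) + 1 ≠ 0 := by positivity
    field_simp
    ring
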